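/- Let A and B be nonempty closed convex subsets of a Hilbert space H with A ∩ B ≠ ∅. Then for any x₀ ∈ H, the Douglas–Rachford iterates x_{n+1} := T_{A,B}(x_n) converge weakly to a fixed point x of T_{A,B}, and P_A(x) ∈ A ∩ B. -/

import Mathlib

open Filter Topology Metric NormedSpace
set_option maxHeartbeats 1000000
open scoped RealInnerProductSpace

lemma aux1 {H : Type*} [NormedAddCommGroup H] [InnerProductSpace ℝ H]
    (u v w : H) (h1 : ⟪u, u - v - w⟫ ≤ 0) (h2 : ⟪v, w - u + v⟫ ≤ 0) :
    ‖w - (2:ℝ)•(u - v)‖ ≤ ‖w‖ := by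
  have hs : ‖w - (2:ℝ)•(u - v)‖^2 ≤ ‖w‖^2 := by
    rw [norm_sub_sq_real, norm_smul]
    have e0 : ‖u - v‖^2 = ‖u‖^2 - 2*⟪u,v⟫ + ‖v‖^2 := norm_sub_sq_real u v
    have e1 : ⟪u, u - v - w⟫ = ‖u‖^2 - ⟪u,v⟫ - ⟪u,w⟫ := by
      simp [inner_sub_right, real_inner_self_eq_norm_sq]
    have e2 : ⟪v, w - u + v⟫ = ⟪v,w⟫ - ⟪v,u⟫ + ‖v‖^2 := by
      simp [inner_sub_right, inner_add_right, real_inner_self_eq_norm_sq]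
    have e3 : ⟪w, (2:ℝ)•(u - v)⟫ = 2*(⟪w,u⟫ - ⟪w,v⟫) := by
      simp [real_inner_smul_right, inner_sub_right]
    have c1 := real_inner_comm w u
    have c2 := real_inner_comm w v
    have c3 := real_inner_comm u v
    rw [e1] at h1; rw [e2] at h2; rw [e3]
    rw [show ‖(2:ℝ)‖ = 2 from by norm_num]
    nlinarith [h1, h2, e0]
  nlinarith [norm_nonneg (w - (2:ℝ)•(u - v)), norm_nonneg w]

lemma aux2 {H : Type*} [NormedAddCommGroup H] [InnerProductSpace ℝ H]
    (a b : H) (hb : ‖b‖ ≤ ‖a‖) :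
    ‖(2:ℝ)⁻¹•(a+b)‖^2 ≤ ‖a‖^2 - ‖(2:ℝ)⁻¹•(a-b)‖^2 := by
  have hp := parallelogram_law_with_norm ℝ a b
  have h1 : ‖(2:ℝ)⁻¹•(a+b)‖ = 2⁻¹*‖a+b‖ := by rw [norm_smul]; norm_num
  have h2 : ‖(2:ℝ)⁻¹•(a-b)‖ = 2⁻¹*‖a-b‖ := by rw [norm_smul]; norm_num
  rw [h1, h2]
  nlinarith [norm_nonneg a, norm_nonneg b, norm_nonneg (a+b), norm_nonneg (a-b)]

theorem stmt7 {H : Type*} [NormedAddCommGroup H] [InnerProductSpace ℝ H] [CompleteSpace H]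
    (A B : Set H) (hAB : (A ∩ B).Nonempty)
    (hAc : IsClosed A) (hBc : IsClosed B) (hAv : Convex ℝ A) (hBv : Convex ℝ B)
    (PA PB : H → H)
    (hPA : ∀ x, PA x ∈ A ∧ ∀ c ∈ A, ‖x - PA x‖ ≤ ‖x - c‖)
    (hPB : ∀ x, PB x ∈ B ∧ ∀ c ∈ B, ‖x - PB x‖ ≤ ‖x - c‖)
    (RA RB T : H → H)
    (hRA : ∀ y, RA y = (2 : ℝ) • PA y - y)
    (hRB : ∀ y, RB y = (2 : ℝ) • PB y - y)
    (hT : ∀ y, T y = (2 : ℝ)⁻¹ • (y + RB (RA y)))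
    (x₀ : H) (seq : ℕ → H) (hseq0 : seq 0 = x₀)
    (hseq : ∀ n, seq (n + 1) = T (seq n)) :
    ∃ x : H, T x = x ∧ PA x ∈ A ∩ B ∧
      ∀ f : H →L[ℝ] ℝ, Filter.Tendsto (fun n => f (seq n)) Filter.atTop (nhds (f x)) := by
  obtain ⟨z, hzA, hzB⟩ := hAB
  -- projection variational characterization
  have hprojA : ∀ x, ∀ c ∈ A, ⟪x - PA x, c - PA x⟫ ≤ 0 := by
    intro x
    have hmem := (hPA x).1
    haveI : Nonempty A := ⟨⟨PA x, hmem⟩⟩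
    have h : ‖x - PA x‖ = ⨅ w : A, ‖x - w‖ := by
      refine le_antisymm (le_ciInf fun w => (hPA x).2 w w.2) ?_
      exact ciInf_le ⟨0, by rintro r ⟨w, rfl⟩; exact norm_nonneg _⟩ (⟨PA x, hmem⟩ : A)
    exact (norm_eq_iInf_iff_real_inner_le_zero hAv hmem).mp h
  have hprojB : ∀ x, ∀ c ∈ B, ⟪x - PB x, c - PB x⟫ ≤ 0 := by
    intro x
    have hmem := (hPB x).1
    haveI : Nonempty B := ⟨⟨PB x, hmem⟩⟩
    have h : ‖x - PB x‖ = ⨅ w : B, ‖x - w‖ := by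
      refine le_antisymm (le_ciInf fun w => (hPB x).2 w w.2) ?_
      exact ciInf_le ⟨0, by rintro r ⟨w, rfl⟩; exact norm_nonneg _⟩ (⟨PB x, hmem⟩ : B)
    exact (norm_eq_iInf_iff_real_inner_le_zero hBv hmem).mp h
  -- reflections are nonexpansive
  have hRAne : ∀ a b, ‖RA a - RA b‖ ≤ ‖a - b‖ := by
    intro a b
    have h1 : ⟪(a - PA a), (a - PA a) - (b - PA b) - (a - b)⟫ ≤ 0 := by
      have h := hprojA a (PA b) (hPA b).1
      have e : PA b - PA a = (a - PA a) - (b - PA b) - (a - b) := by module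
      rwa [e] at h
    have h2 : ⟪(b - PA b), (a - b) - (a - PA a) + (b - PA b)⟫ ≤ 0 := by
      have h := hprojA b (PA a) (hPA a).1
      have e : PA a - PA b = (a - b) - (a - PA a) + (b - PA b) := by module
      rwa [e] at h
    have hv : RA a - RA b = (a - b) - (2:ℝ)•((a - PA a) - (b - PA b)) := by
      rw [hRA, hRA]; module
    rw [hv]; exact aux1 _ _ _ h1 h2
  have hRBne : ∀ a b, ‖RB a - RB b‖ ≤ ‖a - b‖ := by
    intro a b
    have h1 : ⟪(a - PB a), (a - PB a) - (b - PB b) - (a - b)⟫ ≤ 0 := by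
      have h := hprojB a (PB b) (hPB b).1
      have e : PB b - PB a = (a - PB a) - (b - PB b) - (a - b) := by module
      rwa [e] at h
    have h2 : ⟪(b - PB b), (a - b) - (a - PB a) + (b - PB b)⟫ ≤ 0 := by
      have h := hprojB b (PB a) (hPB a).1
      have e : PB a - PB b = (a - b) - (a - PB a) + (b - PB b) := by module
      rwa [e] at h
    have hv : RB a - RB b = (a - b) - (2:ℝ)•((a - PB a) - (b - PB b)) := by
      rw [hRB, hRB]; module
    rw [hv]; exact aux1 _ _ _ h1 h2
  have hSne : ∀ a b, ‖RB (RA a) - RB (RA b)‖ ≤ ‖a - b‖ :=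
    fun a b => le_trans (hRBne _ _) (hRAne a b)
  -- z is a fixed point
  have hPAz : PA z = z := by
    have h := (hPA z).2 z hzA
    have : ‖z - PA z‖ = 0 := le_antisymm (by simpa using h) (norm_nonneg _)
    have := norm_sub_eq_zero_iff.mp this
    exact this.symm
  have hPBz : PB z = z := by
    have h := (hPB z).2 z hzB
    have : ‖z - PB z‖ = 0 := le_antisymm (by simpa using h) (norm_nonneg _)
    exact (norm_sub_eq_zero_iff.mp this).symm
  have hSz : RB (RA z) = z := by
    rw [hRA, hPAz, hRB]
    rw [show (2:ℝ)•z - z = z from by module, hPBz]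
    module
  -- Fejér inequality for any fixed point w of RB ∘ RA
  have hkey : ∀ w, RB (RA w) = w → ∀ x, ‖T x - w‖^2 ≤ ‖x - w‖^2 - ‖x - T x‖^2 := by
    intro w hw x
    have hb : ‖RB (RA x) - w‖ ≤ ‖x - w‖ := by
      calc ‖RB (RA x) - w‖ = ‖RB (RA x) - RB (RA w)‖ := by rw [hw]
        _ ≤ ‖x - w‖ := hSne x w
    have e1 : T x - w = (2:ℝ)⁻¹ • ((x - w) + (RB (RA x) - w)) := by rw [hT]; module
    have e2 : x - T x = (2:ℝ)⁻¹ • ((x - w) - (RB (RA x) - w)) := by rw [hT]; module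
    rw [e1, e2]
    exact aux2 _ _ hb
  -- Fejér monotone sequence facts for any fixed point w
  have hmono : ∀ w, RB (RA w) = w → ∀ n, ‖seq (n+1) - w‖^2 + ‖seq n - seq (n+1)‖^2 ≤ ‖seq n - w‖^2 := by
    intro w hw n
    have := hkey w hw (seq n)
    rw [← hseq n] at this
    linarith
  have hanti : ∀ w, RB (RA w) = w → Antitone (fun n => ‖seq n - w‖^2) := by
    intro w hw
    refine antitone_nat_of_succ_le fun n => ?_
    have := hmono w hw n
    nlinarith [sq_nonneg ‖seq n - seq (n+1)‖]
  have hlim : ∀ w, RB (RA w) = w → ∃ ℓ : ℝ, Tendsto (fun n => ‖seq n - w‖^2) atTop (𝓝 ℓ) := by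
    intro w hw
    refine ⟨_, tendsto_atTop_ciInf (hanti w hw) ⟨0, ?_⟩⟩
    rintro r ⟨n, rfl⟩; positivity
  -- asymptotic regularity
  have hreg : Tendsto (fun n => ‖seq n - RB (RA (seq n))‖) atTop (𝓝 0) := by
    obtain ⟨ℓ, hℓ⟩ := hlim z hSz
    have hd2 : Tendsto (fun n => ‖seq n - seq (n+1)‖^2) atTop (𝓝 0) := by
      have hsub : Tendsto (fun n => ‖seq n - z‖^2 - ‖seq (n+1) - z‖^2) atTop (𝓝 0) := by
        have := hℓ.sub (hℓ.comp (tendsto_add_atTop_nat 1))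
        simpa using this
      refine squeeze_zero (fun n => by positivity) (fun n => ?_) hsub
      have := hmono z hSz n; linarith
    have hd : Tendsto (fun n => ‖seq n - seq (n+1)‖) atTop (𝓝 0) := by
      have := (Real.continuous_sqrt.tendsto 0).comp hd2
      simp only [Real.sqrt_zero, Function.comp_def] at this
      convert this using 2 with n
      rw [Real.sqrt_sq (norm_nonneg _)]
    have he : ∀ n, ‖seq n - RB (RA (seq n))‖ = 2 * ‖seq n - seq (n+1)‖ := by
      intro n
      have e : seq n - RB (RA (seq n)) = (2:ℝ) • (seq n - seq (n+1)) := by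
        rw [hseq n, hT]; module
      rw [e, norm_smul]
      norm_num
    simp only [he]
    have := hd.const_mul 2
    simpa using this
  -- boundedness
  set M : ℝ := ‖x₀ - z‖ + ‖z‖ with hM
  have hbd : ∀ n, ‖seq n‖ ≤ M := by
    intro n
    have h1 : ‖seq n - z‖^2 ≤ ‖seq 0 - z‖^2 := hanti z hSz (Nat.zero_le n)
    have h2 : ‖seq n - z‖ ≤ ‖seq 0 - z‖ := by
      nlinarith [norm_nonneg (seq n - z), norm_nonneg (seq 0 - z)]
    calc ‖seq n‖ = ‖(seq n - z) + z‖ := by rw [sub_add_cancel]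
      _ ≤ ‖seq n - z‖ + ‖z‖ := norm_add_le _ _
      _ ≤ ‖seq 0 - z‖ + ‖z‖ := by linarith
      _ = M := by rw [hseq0]
  -- weak cluster point along any ultrafilter; it is a fixed point of RB ∘ RA
  have hcl : ∀ W : Ultrafilter ℕ, (W : Filter ℕ) ≤ atTop → ∃ x : H,
      RB (RA x) = x ∧ ∀ u : H, Tendsto (fun n => ⟪seq n, u⟫) (W : Filter ℕ) (𝓝 ⟪x, u⟫) := by
    intro W hW
    set φ : ℕ → WeakDual ℝ H :=
      fun n => StrongDual.toWeakDual (InnerProductSpace.toDual ℝ H (seq n)) with hφ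
    have hK := WeakDual.isCompact_closedBall (𝕜 := ℝ) (E := H) 0 M
    have hmem : ∀ n, φ n ∈ WeakDual.toStrongDual ⁻¹' closedBall 0 M := by
      intro n
      simp only [Set.mem_preimage, mem_closedBall, dist_zero_right, hφ]
      have : WeakDual.toStrongDual (StrongDual.toWeakDual (InnerProductSpace.toDual ℝ H (seq n)))
          = InnerProductSpace.toDual ℝ H (seq n) := rfl
      rw [this, (InnerProductSpace.toDual ℝ H).norm_map]
      exact hbd n
    have hle : (Ultrafilter.map φ W : Filter (WeakDual ℝ H)) ≤
        𝓟 (WeakDual.toStrongDual ⁻¹' closedBall 0 M) := by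
      rw [Ultrafilter.coe_map, Filter.le_principal_iff, Filter.mem_map]
      exact Filter.univ_mem' fun n => hmem n
    obtain ⟨g, hgK, hg⟩ := hK.ultrafilter_le_nhds (W.map φ) hle
    have hgT : Tendsto φ (W : Filter ℕ) (𝓝 g) := by
      rw [Filter.Tendsto, ← Ultrafilter.coe_map]; exact hg
    set x : H := (InnerProductSpace.toDual ℝ H).symm (WeakDual.toStrongDual g) with hx
    have hrep : ∀ u, ⟪x, u⟫ = g u := by
      intro u
      have h1 : InnerProductSpace.toDual ℝ H x = WeakDual.toStrongDual g :=
        (InnerProductSpace.toDual ℝ H).apply_symm_apply _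
      have := congrArg (fun f : StrongDual ℝ H => f u) h1
      simpa [InnerProductSpace.toDual_apply_apply] using this
    have hweak : ∀ u : H, Tendsto (fun n => ⟪seq n, u⟫) (W : Filter ℕ) (𝓝 ⟪x, u⟫) := by
      intro u
      have hev : Tendsto (fun n => (φ n) u) (W : Filter ℕ) (𝓝 (g u)) :=
        ((WeakDual.eval_continuous u).tendsto g).comp hgT
      have heq : ∀ n, (φ n) u = ⟪seq n, u⟫ := fun n => rfl
      rw [hrep u]
      simpa only [heq] using hev
    refine ⟨x, ?_, hweak⟩
    -- demiclosedness
    set y := RB (RA x) with hy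
    have hC : ∀ n, ‖seq n - x‖ ≤ M + ‖x‖ := fun n =>
      le_trans (norm_sub_le _ _) (by linarith [hbd n])
    have hgle : ∀ n, 2*⟪seq n, x - y⟫ + (‖y‖^2 - ‖x‖^2) ≤
        ‖seq n - RB (RA (seq n))‖^2 + 2*‖seq n - RB (RA (seq n))‖*(M + ‖x‖) := by
      intro n
      have h1 : ‖seq n - y‖ ≤ ‖seq n - RB (RA (seq n))‖ + ‖seq n - x‖ := by
        calc ‖seq n - y‖ ≤ ‖seq n - RB (RA (seq n))‖ + ‖RB (RA (seq n)) - y‖ := by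
              have e : seq n - y = (seq n - RB (RA (seq n))) + (RB (RA (seq n)) - y) := by module
              rw [e]; exact norm_add_le _ _
          _ ≤ ‖seq n - RB (RA (seq n))‖ + ‖seq n - x‖ :=
              add_le_add le_rfl (hSne (seq n) x)
      have heq : ‖seq n - y‖^2 - ‖seq n - x‖^2 = 2*⟪seq n, x - y⟫ + (‖y‖^2 - ‖x‖^2) := by
        simp only [norm_sub_sq_real, inner_sub_right]; ring
      have hε : (0:ℝ) ≤ ‖seq n - RB (RA (seq n))‖ := norm_nonneg _
      nlinarith [norm_nonneg (seq n - y), norm_nonneg (seq n - x), hC n, h1]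
    have hub : Tendsto (fun n => ‖seq n - RB (RA (seq n))‖^2 +
        2*‖seq n - RB (RA (seq n))‖*(M + ‖x‖)) (W : Filter ℕ) (𝓝 0) := by
      have h0 : Tendsto (fun n => ‖seq n - RB (RA (seq n))‖^2 +
          2*‖seq n - RB (RA (seq n))‖*(M + ‖x‖)) atTop (𝓝 0) := by
        have h1 := (hreg.mul hreg)
        have h2 := (hreg.const_mul 2).mul_const (M + ‖x‖)
        have := h1.add h2
        simp only [mul_zero, zero_mul, add_zero, zero_add] at this
        convert this using 2 with n
        ring
      exact h0.mono_left hW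
    have hlb : Tendsto (fun n => 2*⟪seq n, x - y⟫ + (‖y‖^2 - ‖x‖^2)) (W : Filter ℕ)
        (𝓝 (‖x - y‖^2)) := by
      have h1 := ((hweak (x - y)).const_mul 2).add_const (‖y‖^2 - ‖x‖^2)
      have e : 2*⟪x, x - y⟫ + (‖y‖^2 - ‖x‖^2) = ‖x - y‖^2 := by
        simp only [norm_sub_sq_real, inner_sub_right, real_inner_self_eq_norm_sq]
        have := real_inner_comm x y
        nlinarith [this]
      rwa [e] at h1
    have hle0 : ‖x - y‖^2 ≤ 0 := le_of_tendsto_of_tendsto' hlb hub hgle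
    have : x - y = 0 := by
      have h0 : ‖x - y‖ = 0 := by nlinarith [norm_nonneg (x - y)]
      exact norm_eq_zero.mp h0
    have := sub_eq_zero.mp this
    exact this.symm
  -- the weak limit
  obtain ⟨x, hxfix, hxweak⟩ := hcl (Ultrafilter.of atTop) (Ultrafilter.of_le _)
  have hTx : T x = x := by rw [hT, hxfix]; module
  have hPAxB : PA x ∈ B := by
    have hb : (2:ℝ) • PB (RA x) - RA x = x := by rw [← hRB]; exact hxfix
    have h2 : (2:ℝ) • PB (RA x) = (2:ℝ) • PA x := by
      have := eq_add_of_sub_eq hb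
      rw [this, hRA]; module
    have h3 : PB (RA x) = PA x := smul_right_injective H two_ne_zero h2
    rw [← h3]; exact (hPB (RA x)).1
  -- uniqueness of weak cluster points
  have huniq : ∀ W : Ultrafilter ℕ, (W : Filter ℕ) ≤ atTop →
      ∀ u, Tendsto (fun n => ⟪seq n, u⟫) (W : Filter ℕ) (𝓝 ⟪x, u⟫) := by
    intro W hW
    obtain ⟨y, hyfix, hyweak⟩ := hcl W hW
    have hxy : y = x := by
      obtain ⟨ℓx, hℓx⟩ := hlim x hxfix
      obtain ⟨ℓy, hℓy⟩ := hlim y hyfix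
      have hD : Tendsto (fun n => 2*⟪seq n, x - y⟫ + (‖y‖^2 - ‖x‖^2)) atTop (𝓝 (ℓy - ℓx)) := by
        have h := hℓy.sub hℓx
        refine h.congr fun n => ?_
        simp only [norm_sub_sq_real, inner_sub_right]; ring
      have l1 : Tendsto (fun n => 2*⟪seq n, x - y⟫ + (‖y‖^2 - ‖x‖^2))
          (↑(Ultrafilter.of (atTop : Filter ℕ)) : Filter ℕ) (𝓝 (2*⟪x, x - y⟫ + (‖y‖^2 - ‖x‖^2))) :=
        by exact ((hxweak (x - y)).const_mul 2).add tendsto_const_nhds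
      have l2 : Tendsto (fun n => 2*⟪seq n, x - y⟫ + (‖y‖^2 - ‖x‖^2))
          (W : Filter ℕ) (𝓝 (2*⟪y, x - y⟫ + (‖y‖^2 - ‖x‖^2))) :=
        by exact ((hyweak (x - y)).const_mul 2).add tendsto_const_nhds
      have e1 : 2*⟪x, x - y⟫ + (‖y‖^2 - ‖x‖^2) = ℓy - ℓx :=
        tendsto_nhds_unique l1 (hD.mono_left (Ultrafilter.of_le _))
      have e2 : 2*⟪y, x - y⟫ + (‖y‖^2 - ‖x‖^2) = ℓy - ℓx :=
        tendsto_nhds_unique l2 (hD.mono_left hW)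
      have e3 : ⟪x - y, x - y⟫ = 0 := by
        rw [inner_sub_left]; linarith
      have := inner_self_eq_zero.mp e3
      exact (sub_eq_zero.mp this).symm
    intro u
    have := hyweak u
    rwa [hxy] at this
  refine ⟨x, hTx, ⟨(hPA x).1, hPAxB⟩, ?_⟩
  intro f
  have hf : ∀ v, f v = ⟪v, (InnerProductSpace.toDual ℝ H).symm f⟫ := by
    intro v
    rw [real_inner_comm, InnerProductSpace.toDual_symm_apply]
  simp only [hf]
  rw [tendsto_iff_ultrafilter]
  intro W hW
  exact huniq W hW _
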